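/- arXiv:2305.14149 — 2 statements merged into one kernel-verified Lean document; each statement's English description precedes it below -/
import Mathlib

section
/- If the belief MDP of a POMDP has finitely many reachable states, then the FSC F_B obtained from an optimal memoryless belief policy σ_B (with nodes the reachable beliefs, action function γ(b,z) = σ_B(b), and update δ(b,z,z') = the Bayesian successor of b under σ_B(b) and z') induces on the POMDP the same reachability probability of T as σ_B achieves in the belief MDP, namely the optimal value sup over observation-based policies. -/
open scoped ENNReal Classical

/-- Probability `P(b,α,z')` of observing `z'` after taking action `a` in belief `b`. -/
noncomputable def obsProb {S A Z : Type*} (P : S → A → S → ℝ≥0∞) (O : S → Z)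
    (b : S → ℝ≥0∞) (a : A) (z' : Z) : ℝ≥0∞ :=
  ∑' s, b s * ∑' s', (if O s' = z' then P s a s' else 0)

/-- Bayesian belief update `⟦b,α,z'⟧`. -/
noncomputable def beliefUpdate {S A Z : Type*} (P : S → A → S → ℝ≥0∞) (O : S → Z)
    (b : S → ℝ≥0∞) (a : A) (z' : Z) : S → ℝ≥0∞ :=
  fun s' => if O s' = z' then (∑' s, b s * P s a s') / obsProb P O b a z' else 0

/-- A belief is a target belief iff it is supported on states with the target observation. -/
def targetBelief {S Z : Type*} (O : S → Z) (zT : Z) (b : S → ℝ≥0∞) : Prop :=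
  ∀ s, b s ≠ 0 → O s = zT

/-- `n`-step maximal reachability of target beliefs in the belief MDP (value iteration). -/
noncomputable def beliefMaxReachN {S A Z : Type*} [Fintype Z]
    (P : S → A → S → ℝ≥0∞) (O : S → Z) (zT : Z) : ℕ → (S → ℝ≥0∞) → ℝ≥0∞
  | 0, b => if targetBelief O zT b then 1 else 0
  | n + 1, b => if targetBelief O zT b then 1 else
      ⨆ a, ∑ z' : Z, obsProb P O b a z' *
        beliefMaxReachN P O zT n (beliefUpdate P O b a z')

/-- Maximal reachability probability of target beliefs in the belief MDP. -/
noncomputable def beliefMaxReach {S A Z : Type*} [Fintype Z]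
    (P : S → A → S → ℝ≥0∞) (O : S → Z) (zT : Z) (b : S → ℝ≥0∞) : ℝ≥0∞ :=
  ⨆ n, beliefMaxReachN P O zT n b

/-- `n`-step reachability of target beliefs in the belief MC induced by the memoryless
belief policy `σB`. -/
noncomputable def beliefPolReachN {S A Z : Type*} [Fintype Z]
    (P : S → A → S → ℝ≥0∞) (O : S → Z) (zT : Z) (σB : (S → ℝ≥0∞) → A) :
    ℕ → (S → ℝ≥0∞) → ℝ≥0∞
  | 0, b => if targetBelief O zT b then 1 else 0
  | n + 1, b => if targetBelief O zT b then 1 else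
      ∑ z' : Z, obsProb P O b (σB b) z' *
        beliefPolReachN P O zT σB n (beliefUpdate P O b (σB b) z')

/-- Reachability probability of target beliefs in the belief MC induced by `σB`. -/
noncomputable def beliefPolReach {S A Z : Type*} [Fintype Z]
    (P : S → A → S → ℝ≥0∞) (O : S → Z) (zT : Z) (σB : (S → ℝ≥0∞) → A)
    (b : S → ℝ≥0∞) : ℝ≥0∞ :=
  ⨆ n, beliefPolReachN P O zT σB n b

/-- The set of beliefs reachable from `b0` in the belief MDP. -/
inductive ReachableBelief {S A Z : Type*} (P : S → A → S → ℝ≥0∞) (O : S → Z)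
    (b0 : S → ℝ≥0∞) : (S → ℝ≥0∞) → Prop
  | init : ReachableBelief P O b0 b0
  | step {b : S → ℝ≥0∞} (a : A) (z' : Z) :
      ReachableBelief P O b0 b → obsProb P O b a z' ≠ 0 →
      ReachableBelief P O b0 (beliefUpdate P O b a z')

/-- `n`-step reachability probability of `T` in a Markov chain. -/
noncomputable def mcReachN {St : Type*} (Q : St → St → ℝ≥0∞) (T : Set St) :
    ℕ → St → ℝ≥0∞
  | 0, s => if s ∈ T then 1 else 0
  | n + 1, s => if s ∈ T then 1 else ∑' s', Q s s' * mcReachN Q T n s'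

/-- Reachability probability of `T` in a Markov chain. -/
noncomputable def mcReach {St : Type*} (Q : St → St → ℝ≥0∞) (T : Set St) (s : St) : ℝ≥0∞ :=
  ⨆ n, mcReachN Q T n s

/-- Transition matrix of the MC induced on a POMDP by an FSC `(γ, δ)` with node type `N`. -/
noncomputable def inducedQ {S A Z N : Type*} (P : S → A → S → ℝ≥0∞) (O : S → Z)
    (γ : N → Z → A) (δ : N → Z → Z → N) : (S × N) → (S × N) → ℝ≥0∞ :=
  fun p q =>
    (if q.2 = δ p.2 (O p.1) (O q.1) then (1 : ℝ≥0∞) else 0) * P p.1 (γ p.2 (O p.1)) q.1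

/-- A finite path: an initial state followed by a list of (action, state) steps. -/
structure FPath (S A : Type*) where
  first : S
  steps : List (A × S)

/-- The last state of a finite path. -/
def FPath.last {S A : Type*} (π : FPath S A) : S :=
  match π.steps.getLast? with
  | none => π.first
  | some p => p.2

/-- Extending a finite path by one step. -/
def FPath.extend {S A : Type*} (π : FPath S A) (a : A) (s : S) : FPath S A :=
  ⟨π.first, π.steps ++ [(a, s)]⟩

/-- The observation trace of a finite path. -/
def obsTrace {S A Z : Type*} (O : S → Z) (π : FPath S A) : Z × List (A × Z) :=
  (O π.first, π.steps.map (fun p => (p.1, O p.2)))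

/-- A (history-dependent) policy is observation-based if it only depends on the
observation trace of the path. -/
def ObsBased {S A Z : Type*} (O : S → Z) (σ : FPath S A → A) : Prop :=
  ∀ π π' : FPath S A, obsTrace O π = obsTrace O π' → σ π = σ π'

/-- `n`-step reachability probability of `T` under a history-dependent policy `σ`. -/
noncomputable def polReachN {S A : Type*} (P : S → A → S → ℝ≥0∞) (T : Set S)
    (σ : FPath S A → A) : ℕ → FPath S A → ℝ≥0∞
  | 0, π => if π.last ∈ T then 1 else 0
  | n + 1, π => if π.last ∈ T then 1 else
      ∑' s', P π.last (σ π) s' * polReachN P T σ n (π.extend (σ π) s')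

/-- Reachability probability of `T` from `s0` under a history-dependent policy `σ`. -/
noncomputable def polReach {S A : Type*} (P : S → A → S → ℝ≥0∞) (T : Set S)
    (σ : FPath S A → A) (s0 : S) : ℝ≥0∞ :=
  ⨆ n, polReachN P T σ n ⟨s0, []⟩

section AuxBelief

variable {S A Z : Type*} [Fintype Z]
variable (P : S → A → S → ℝ≥0∞) (O : S → Z)

lemma obsProb_le_one (hP : ∀ s a, ∑' s', P s a s' = 1) (b : S → ℝ≥0∞)
    (hb : ∑' s, b s = 1) (a : A) (z' : Z) : obsProb P O b a z' ≤ 1 := by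
  calc obsProb P O b a z'
      ≤ ∑' s, b s * ∑' s', P s a s' := by
        refine ENNReal.tsum_le_tsum fun s => mul_le_mul_right ?_ _
        refine ENNReal.tsum_le_tsum fun s' => ?_
        split <;> simp
    _ = ∑' s, b s * 1 := tsum_congr fun s => by rw [hP]
    _ = 1 := by simpa using hb

lemma obsProb_ne_top (hP : ∀ s a, ∑' s', P s a s' = 1) (b : S → ℝ≥0∞)
    (hb : ∑' s, b s = 1) (a : A) (z' : Z) : obsProb P O b a z' ≠ ⊤ :=
  ((obsProb_le_one P O hP b hb a z').trans_lt (by norm_num)).ne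

lemma num_eq_zero (b : S → ℝ≥0∞) (a : A) (z' : Z)
    (h : obsProb P O b a z' = 0) (s' : S) (hs' : O s' = z') :
    (∑' s, b s * P s a s') = 0 := by
  have h0 : ∀ s, b s * ∑' s'', (if O s'' = z' then P s a s'' else 0) = 0 :=
    ENNReal.tsum_eq_zero.mp h
  refine ENNReal.tsum_eq_zero.mpr fun s => ?_
  rcases mul_eq_zero.mp (h0 s) with h1 | h1
  · simp [h1]
  · have h2 : (if O s' = z' then P s a s' else 0) = 0 := ENNReal.tsum_eq_zero.mp h1 s'
    rw [if_pos hs'] at h2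
    simp [h2]

lemma obsProb_as_sum (b : S → ℝ≥0∞) (a : A) (z' : Z) :
    (∑' s', if O s' = z' then (∑' s, b s * P s a s') else 0) = obsProb P O b a z' := by
  calc (∑' s', if O s' = z' then (∑' s, b s * P s a s') else 0)
      = ∑' s', ∑' s, (if O s' = z' then b s * P s a s' else 0) :=
        tsum_congr fun s' => by split <;> simp
    _ = ∑' s, ∑' s', (if O s' = z' then b s * P s a s' else 0) := ENNReal.tsum_comm
    _ = ∑' s, b s * ∑' s', (if O s' = z' then P s a s' else 0) := by
        refine tsum_congr fun s => ?_
        rw [← ENNReal.tsum_mul_left]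
        exact tsum_congr fun s' => by split <;> simp
    _ = obsProb P O b a z' := rfl

lemma sum_beliefUpdate (hP : ∀ s a, ∑' s', P s a s' = 1) (b : S → ℝ≥0∞)
    (hb : ∑' s, b s = 1) (a : A) (z' : Z) (hc : obsProb P O b a z' ≠ 0) :
    ∑' s', beliefUpdate P O b a z' s' = 1 := by
  have h1 : ∑' s', beliefUpdate P O b a z' s'
      = (∑' s', if O s' = z' then (∑' s, b s * P s a s') else 0) / obsProb P O b a z' := by
    rw [div_eq_mul_inv, ← ENNReal.tsum_mul_right]
    refine tsum_congr fun s' => ?_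
    unfold beliefUpdate
    split <;> simp [div_eq_mul_inv]
  rw [h1, obsProb_as_sum]
  exact ENNReal.div_self hc (obsProb_ne_top P O hP b hb a z')

lemma beliefUpdate_supp (b : S → ℝ≥0∞) (a : A) (z' : Z) (s' : S)
    (h : beliefUpdate P O b a z' s' ≠ 0) : O s' = z' := by
  by_contra hne
  exact h (if_neg hne)

lemma target_update (zT : Z) (b : S → ℝ≥0∞) (a : A) :
    targetBelief O zT (beliefUpdate P O b a zT) :=
  fun s hs => beliefUpdate_supp P O b a zT s hs

lemma exchange (hP : ∀ s a, ∑' s', P s a s' = 1) (b : S → ℝ≥0∞)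
    (hb : ∑' s, b s = 1) (a : A) (G : S → Z → ℝ≥0∞) :
    ∑' s, b s * ∑' s', P s a s' * G s' (O s')
      = ∑ z' : Z, obsProb P O b a z' * ∑' s', beliefUpdate P O b a z' s' * G s' z' := by
  calc ∑' s, b s * ∑' s', P s a s' * G s' (O s')
      = ∑' s, ∑' s', b s * (P s a s' * G s' (O s')) :=
        tsum_congr fun s => ENNReal.tsum_mul_left.symm
    _ = ∑' s', ∑' s, b s * (P s a s' * G s' (O s')) := ENNReal.tsum_comm
    _ = ∑' s', (∑' s, b s * P s a s') * G s' (O s') := by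
        refine tsum_congr fun s' => ?_
        rw [← ENNReal.tsum_mul_right]
        exact tsum_congr fun s => by ring
    _ = ∑' s', ∑ z' : Z, (if O s' = z' then (∑' s, b s * P s a s') * G s' z' else 0) := by
        refine tsum_congr fun s' => ?_
        rw [Finset.sum_ite_eq Finset.univ (O s')
          (fun z' => (∑' s, b s * P s a s') * G s' z')]
        simp
    _ = ∑ z' : Z, ∑' s', (if O s' = z' then (∑' s, b s * P s a s') * G s' z' else 0) :=
        Summable.tsum_finsetSum fun _ _ => ENNReal.summable
    _ = ∑ z' : Z, obsProb P O b a z' * ∑' s', beliefUpdate P O b a z' s' * G s' z' := by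
        refine Finset.sum_congr rfl fun z' _ => ?_
        rw [← ENNReal.tsum_mul_left]
        refine tsum_congr fun s' => ?_
        unfold beliefUpdate
        by_cases hz : O s' = z'
        · simp only [if_pos hz]
          by_cases hc : obsProb P O b a z' = 0
          · rw [hc, num_eq_zero P O b a z' hc s' hz]
            simp
          · rw [← mul_assoc, ENNReal.mul_div_cancel hc (obsProb_ne_top P O hP b hb a z')]
        · simp [hz]

end AuxBelief

section AuxMC

variable {S A Z : Type*} [Fintype Z]
variable (P : S → A → S → ℝ≥0∞) (O : S → Z) (σB : (S → ℝ≥0∞) → A)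

/-- The transition matrix induced by the FSC `F_B`. -/
noncomputable def QF : (S × (S → ℝ≥0∞)) → (S × (S → ℝ≥0∞)) → ℝ≥0∞ :=
  inducedQ P O (fun (b : S → ℝ≥0∞) (_ : Z) => σB b)
    (fun (b : S → ℝ≥0∞) (_ : Z) (z' : Z) => beliefUpdate P O b (σB b) z')

lemma mc_target {St : Type*} (Q : St → St → ℝ≥0∞) (T' : Set St) (n : ℕ) (s : St)
    (h : s ∈ T') : mcReachN Q T' n s = 1 := by
  cases n <;> simp [mcReachN, h]

variable (T : Set S) (zT : Z)

lemma mc_succ (hT : ∀ s, s ∈ T ↔ O s = zT)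
    (habs : ∀ s ∈ T, ∀ a s', P s a s' = if s' = s then 1 else 0) (n : ℕ)
    (s : S) (b : S → ℝ≥0∞) :
    mcReachN (QF P O σB) {p : S × (S → ℝ≥0∞) | p.1 ∈ T} (n + 1) (s, b)
      = ∑' s', P s (σB b) s'
          * mcReachN (QF P O σB) {p : S × (S → ℝ≥0∞) | p.1 ∈ T} n
              (s', beliefUpdate P O b (σB b) (O s')) := by
  have hprod : ∀ (f : S × (S → ℝ≥0∞) → ℝ≥0∞), ∑' q, f q = ∑' s', ∑' b', f (s', b') :=
    fun f => ENNReal.tsum_prod (f := fun a b => f (a, b))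
  have hinner : ∀ s', (∑' b', QF P O σB (s, b) (s', b')
        * mcReachN (QF P O σB) {p : S × (S → ℝ≥0∞) | p.1 ∈ T} n (s', b'))
      = P s (σB b) s'
          * mcReachN (QF P O σB) {p : S × (S → ℝ≥0∞) | p.1 ∈ T} n
              (s', beliefUpdate P O b (σB b) (O s')) := by
    intro s'
    rw [tsum_eq_single (beliefUpdate P O b (σB b) (O s'))
      (fun b' hb' => by simp [QF, inducedQ, hb'])]
    simp [QF, inducedQ]
  by_cases hs : s ∈ T
  · rw [mc_target _ _ _ _ (by simpa using hs)]
    have : ∀ s', P s (σB b) s'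
          * mcReachN (QF P O σB) {p : S × (S → ℝ≥0∞) | p.1 ∈ T} n
              (s', beliefUpdate P O b (σB b) (O s'))
        = (if s' = s then 1 else 0)
          * mcReachN (QF P O σB) {p : S × (S → ℝ≥0∞) | p.1 ∈ T} n
              (s', beliefUpdate P O b (σB b) (O s')) := by
      intro s'; rw [habs s hs]
    rw [tsum_congr this, tsum_eq_single s (fun s' hs' => by simp [hs'])]
    rw [mc_target _ _ _ _ (by simpa using hs)]
    simp
  · show (if (s, b) ∈ {p : S × (S → ℝ≥0∞) | p.1 ∈ T} then _ else _) = _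
    rw [if_neg (by simpa using hs), hprod]
    exact tsum_congr hinner

lemma mc_le_one (hP : ∀ s a, ∑' s', P s a s' = 1)
    (hT : ∀ s, s ∈ T ↔ O s = zT)
    (habs : ∀ s ∈ T, ∀ a s', P s a s' = if s' = s then 1 else 0) :
    ∀ (n : ℕ) (s : S) (b : S → ℝ≥0∞),
      mcReachN (QF P O σB) {p : S × (S → ℝ≥0∞) | p.1 ∈ T} n (s, b) ≤ 1 := by
  intro n
  induction n with
  | zero => intro s b; show (if _ then _ else _) ≤ (1 : ℝ≥0∞); split <;> simp
  | succ n ih =>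
      intro s b
      rw [mc_succ P O σB T zT hT habs]
      calc ∑' s', P s (σB b) s'
            * mcReachN (QF P O σB) {p : S × (S → ℝ≥0∞) | p.1 ∈ T} n
                (s', beliefUpdate P O b (σB b) (O s'))
          ≤ ∑' s', P s (σB b) s' * 1 :=
            ENNReal.tsum_le_tsum fun s' => mul_le_mul_right (ih _ _) _
        _ = 1 := by simpa using hP s (σB b)

lemma lemA (hP : ∀ s a, ∑' s', P s a s' = 1)
    (hT : ∀ s, s ∈ T ↔ O s = zT)
    (habs : ∀ s ∈ T, ∀ a s', P s a s' = if s' = s then 1 else 0) :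
    ∀ (n : ℕ) (b : S → ℝ≥0∞), (∑' s, b s = 1) →
      beliefPolReachN P O zT σB n b
        ≤ ∑' s, b s * mcReachN (QF P O σB) {p : S × (S → ℝ≥0∞) | p.1 ∈ T} n (s, b) := by
  intro n
  induction n with
  | zero =>
      intro b hb
      by_cases ht : targetBelief O zT b
      · have : ∑' s, b s * mcReachN (QF P O σB) {p : S × (S → ℝ≥0∞) | p.1 ∈ T} 0 (s, b)
            = ∑' s, b s := by
          refine tsum_congr fun s => ?_
          by_cases hbs : b s = 0
          · simp [hbs]
          · rw [mc_target _ _ _ _ (by simpa using (hT s).mpr (ht s hbs)), mul_one]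
        rw [this, hb]
        simp [beliefPolReachN, ht]
      · simp [beliefPolReachN, ht]
  | succ n ih =>
      intro b hb
      by_cases ht : targetBelief O zT b
      · have : ∑' s, b s * mcReachN (QF P O σB) {p : S × (S → ℝ≥0∞) | p.1 ∈ T} (n+1) (s, b)
            = ∑' s, b s := by
          refine tsum_congr fun s => ?_
          by_cases hbs : b s = 0
          · simp [hbs]
          · rw [mc_target _ _ _ _ (by simpa using (hT s).mpr (ht s hbs)), mul_one]
        rw [this, hb]
        simp [beliefPolReachN, ht]
      · have hmc : ∑' s, b s
              * mcReachN (QF P O σB) {p : S × (S → ℝ≥0∞) | p.1 ∈ T} (n+1) (s, b)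
            = ∑ z' : Z, obsProb P O b (σB b) z'
                * ∑' s', beliefUpdate P O b (σB b) z' s'
                    * mcReachN (QF P O σB) {p : S × (S → ℝ≥0∞) | p.1 ∈ T} n
                        (s', beliefUpdate P O b (σB b) z') := by
          rw [tsum_congr fun s => by rw [mc_succ P O σB T zT hT habs]]
          exact exchange P O hP b hb (σB b)
            (fun s' z => mcReachN (QF P O σB) {p : S × (S → ℝ≥0∞) | p.1 ∈ T} n
              (s', beliefUpdate P O b (σB b) z))
        rw [hmc]
        simp only [beliefPolReachN, if_neg ht]
        refine Finset.sum_le_sum fun z' _ => ?_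
        by_cases hc : obsProb P O b (σB b) z' = 0
        · simp [hc]
        · exact mul_le_mul_right (ih _ (sum_beliefUpdate P O hP b hb (σB b) z' hc)) _

lemma lemB (hP : ∀ s a, ∑' s', P s a s' = 1)
    (hT : ∀ s, s ∈ T ↔ O s = zT)
    (habs : ∀ s ∈ T, ∀ a s', P s a s' = if s' = s then 1 else 0) :
    ∀ (n : ℕ) (b : S → ℝ≥0∞), (∑' s, b s = 1) →
      ∑' s, b s * mcReachN (QF P O σB) {p : S × (S → ℝ≥0∞) | p.1 ∈ T} n (s, b)
        ≤ beliefPolReachN P O zT σB (n + 1) b := by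
  intro n
  induction n with
  | zero =>
      intro b hb
      by_cases ht : targetBelief O zT b
      · calc ∑' s, b s * mcReachN (QF P O σB) {p : S × (S → ℝ≥0∞) | p.1 ∈ T} 0 (s, b)
            ≤ ∑' s, b s * 1 :=
              ENNReal.tsum_le_tsum fun s =>
                mul_le_mul_right (mc_le_one P O σB T zT hP hT habs 0 s b) _
          _ = 1 := by simpa using hb
          _ = beliefPolReachN P O zT σB 1 b := by simp [beliefPolReachN, ht]
      · have h1 : ∑' s, b s * mcReachN (QF P O σB) {p : S × (S → ℝ≥0∞) | p.1 ∈ T} 0 (s, b)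
            ≤ obsProb P O b (σB b) zT := by
          refine ENNReal.tsum_le_tsum fun s => mul_le_mul_right ?_ _
          show (if (s, b) ∈ {p : S × (S → ℝ≥0∞) | p.1 ∈ T} then (1:ℝ≥0∞) else 0)
              ≤ ∑' s', (if O s' = zT then P s (σB b) s' else 0)
          by_cases hs : s ∈ T
          · rw [if_pos (by simpa using hs)]
            have hterm : (if O s = zT then P s (σB b) s else 0) = 1 := by
              rw [if_pos ((hT s).mp hs), habs s hs, if_pos rfl]
            calc (1 : ℝ≥0∞) = (if O s = zT then P s (σB b) s else 0) := hterm.symm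
              _ ≤ ∑' s', (if O s' = zT then P s (σB b) s' else 0) := ENNReal.le_tsum s
          · rw [if_neg (by simpa using hs)]
            exact zero_le
        have h2 : obsProb P O b (σB b) zT
            ≤ beliefPolReachN P O zT σB 1 b := by
          simp only [beliefPolReachN, if_neg ht]
          have := Finset.single_le_sum
            (f := fun z' => obsProb P O b (σB b) z'
              * beliefPolReachN P O zT σB 0 (beliefUpdate P O b (σB b) z'))
            (fun _ _ => zero_le) (Finset.mem_univ zT)
          refine le_trans ?_ this
          show obsProb P O b (σB b) zT
              ≤ obsProb P O b (σB b) zT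
                * beliefPolReachN P O zT σB 0 (beliefUpdate P O b (σB b) zT)
          rw [show beliefPolReachN P O zT σB 0 (beliefUpdate P O b (σB b) zT) = 1 by
            simp [beliefPolReachN, target_update P O zT b (σB b)]]
          simp
        exact h1.trans h2
  | succ n ih =>
      intro b hb
      by_cases ht : targetBelief O zT b
      · calc ∑' s, b s * mcReachN (QF P O σB) {p : S × (S → ℝ≥0∞) | p.1 ∈ T} (n+1) (s, b)
            ≤ ∑' s, b s * 1 :=
              ENNReal.tsum_le_tsum fun s =>
                mul_le_mul_right (mc_le_one P O σB T zT hP hT habs (n+1) s b) _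
          _ = 1 := by simpa using hb
          _ = beliefPolReachN P O zT σB (n + 2) b := by simp [beliefPolReachN, ht]
      · have hmc : ∑' s, b s
              * mcReachN (QF P O σB) {p : S × (S → ℝ≥0∞) | p.1 ∈ T} (n+1) (s, b)
            = ∑ z' : Z, obsProb P O b (σB b) z'
                * ∑' s', beliefUpdate P O b (σB b) z' s'
                    * mcReachN (QF P O σB) {p : S × (S → ℝ≥0∞) | p.1 ∈ T} n
                        (s', beliefUpdate P O b (σB b) z') := by
          rw [tsum_congr fun s => by rw [mc_succ P O σB T zT hT habs]]
          exact exchange P O hP b hb (σB b)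
            (fun s' z => mcReachN (QF P O σB) {p : S × (S → ℝ≥0∞) | p.1 ∈ T} n
              (s', beliefUpdate P O b (σB b) z))
        rw [hmc]
        have : beliefPolReachN P O zT σB (n + 2) b
            = ∑ z' : Z, obsProb P O b (σB b) z'
                * beliefPolReachN P O zT σB (n + 1) (beliefUpdate P O b (σB b) z') := by
          simp [beliefPolReachN, ht]
        rw [this]
        refine Finset.sum_le_sum fun z' _ => ?_
        by_cases hc : obsProb P O b (σB b) z' = 0
        · simp [hc]
        · exact mul_le_mul_right (ih _ (sum_beliefUpdate P O hP b hb (σB b) z' hc)) _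

end AuxMC

section AuxPath

variable {S A Z : Type*} [Fintype Z]
variable (P : S → A → S → ℝ≥0∞) (O : S → Z) (T : Set S) (zT : Z)

lemma extend_last (π : FPath S A) (a : A) (s : S) : (π.extend a s).last = s := by
  simp [FPath.extend, FPath.last, List.getLast?_concat]

lemma first_last (s : S) : (FPath.mk s ([] : List (A × S))).last = s := rfl

lemma obsTrace_extend (π : FPath S A) (a : A) (s : S) :
    obsTrace O (π.extend a s) = ((obsTrace O π).1, (obsTrace O π).2 ++ [(a, O s)]) := by
  simp [obsTrace, FPath.extend]

lemma pol_target (σ : FPath S A → A) (n : ℕ) (π : FPath S A) (h : π.last ∈ T) :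
    polReachN P T σ n π = 1 := by
  cases n <;> simp [polReachN, h]

lemma pol_le_one (hP : ∀ s a, ∑' s', P s a s' = 1) (σ : FPath S A → A) :
    ∀ (n : ℕ) (π : FPath S A), polReachN P T σ n π ≤ 1 := by
  intro n
  induction n with
  | zero => intro π; show (if _ then _ else _) ≤ (1:ℝ≥0∞); split <;> simp
  | succ n ih =>
      intro π
      show (if _ then _ else _) ≤ (1:ℝ≥0∞)
      split
      · exact le_rfl
      · calc ∑' s', P π.last (σ π) s' * polReachN P T σ n (π.extend (σ π) s')
            ≤ ∑' s', P π.last (σ π) s' * 1 :=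
              ENNReal.tsum_le_tsum fun s' => mul_le_mul_right (ih _) _
          _ = 1 := by simpa using hP π.last (σ π)

lemma pol_succ (habs : ∀ s ∈ T, ∀ a s', P s a s' = if s' = s then 1 else 0)
    (σ : FPath S A → A) (n : ℕ) (π : FPath S A) :
    polReachN P T σ (n + 1) π
      = ∑' s', P π.last (σ π) s' * polReachN P T σ n (π.extend (σ π) s') := by
  by_cases h : π.last ∈ T
  · rw [pol_target P T σ (n+1) π h]
    rw [tsum_congr (fun s' => by rw [habs π.last h])]
    rw [tsum_eq_single π.last (fun s' hs' => by simp [hs'])]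
    rw [pol_target P T σ n _ (by rw [extend_last]; exact h)]
    simp
  · simp [polReachN, h]

lemma pol_congr (σ : FPath S A → A) (R : FPath S A → FPath S A → Prop)
    (hact : ∀ π π', R π π' → σ π = σ π')
    (hext : ∀ π π' (a : A) (s' : S), R π π' → R (π.extend a s') (π'.extend a s')) :
    ∀ (n : ℕ) (π π' : FPath S A), R π π' → π.last = π'.last →
      polReachN P T σ n π = polReachN P T σ n π' := by
  intro n
  induction n with
  | zero => intro π π' _ hl; simp [polReachN, hl]
  | succ n ih =>
      intro π π' hR hl
      show (if _ then _ else _) = (if _ then _ else _)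
      rw [hl, hact _ _ hR]
      refine if_congr Iff.rfl rfl (tsum_congr fun s' => ?_)
      congr 1
      exact ih _ _ (hext _ _ _ _ hR) ((extend_last π _ s').trans (extend_last π' _ s').symm)

end AuxPath

section AuxMain

variable {S A Z : Type*} [Fintype Z]
variable (P : S → A → S → ℝ≥0∞) (O : S → Z) (T : Set S) (zT : Z)

lemma lemA2 (hP : ∀ s a, ∑' s', P s a s' = 1)
    (hT : ∀ s, s ∈ T ↔ O s = zT)
    (habs : ∀ s ∈ T, ∀ a s', P s a s' = if s' = s then 1 else 0)
    (hA : Nonempty A) (σ : FPath S A → A) (hσ : ObsBased O σ) :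
    ∀ (n : ℕ) (b : S → ℝ≥0∞) (πf : S → FPath S A), (∑' s, b s = 1) →
      (∀ s, (πf s).last = s) →
      (∀ s t, b s ≠ 0 → b t ≠ 0 → obsTrace O (πf s) = obsTrace O (πf t)) →
      ∑' s, b s * polReachN P T σ n (πf s) ≤ beliefMaxReachN P O zT (n + 1) b := by
  intro n
  induction n with
  | zero =>
      intro b πf hb hlast htr
      by_cases ht : targetBelief O zT b
      · rw [show beliefMaxReachN P O zT 1 b = 1 by simp [beliefMaxReachN, ht]]
        calc ∑' s, b s * polReachN P T σ 0 (πf s)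
            ≤ ∑' s, b s * 1 :=
              ENNReal.tsum_le_tsum fun s =>
                mul_le_mul_right (pol_le_one P T hP σ 0 _) _
          _ = 1 := by simpa using hb
      · obtain ⟨a0⟩ := hA
        simp only [beliefMaxReachN, if_neg ht]
        refine le_trans ?_ (le_iSup (f := fun a => ∑ z' : Z, obsProb P O b a z'
          * beliefMaxReachN P O zT 0 (beliefUpdate P O b a z')) a0)
        have hsingle := Finset.single_le_sum
          (f := fun z' => obsProb P O b a0 z'
            * beliefMaxReachN P O zT 0 (beliefUpdate P O b a0 z'))
          (fun _ _ => zero_le) (Finset.mem_univ zT)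
        refine le_trans ?_ hsingle
        show ∑' s, b s * polReachN P T σ 0 (πf s)
            ≤ obsProb P O b a0 zT * beliefMaxReachN P O zT 0 (beliefUpdate P O b a0 zT)
        rw [show beliefMaxReachN P O zT 0 (beliefUpdate P O b a0 zT) = 1 by
          simp [beliefMaxReachN, target_update P O zT b a0], mul_one]
        refine ENNReal.tsum_le_tsum fun s => mul_le_mul_right ?_ _
        show (if (πf s).last ∈ T then (1:ℝ≥0∞) else 0)
            ≤ ∑' s', (if O s' = zT then P s a0 s' else 0)
        rw [hlast]
        by_cases hs : s ∈ T
        · rw [if_pos hs]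
          have hterm : (if O s = zT then P s a0 s else 0) = 1 := by
            rw [if_pos ((hT s).mp hs), habs s hs, if_pos rfl]
          calc (1 : ℝ≥0∞) = (if O s = zT then P s a0 s else 0) := hterm.symm
            _ ≤ _ := ENNReal.le_tsum s
        · rw [if_neg hs]; exact zero_le
  | succ n ih =>
      intro b πf hb hlast htr
      by_cases ht : targetBelief O zT b
      · rw [show beliefMaxReachN P O zT (n + 2) b = 1 by simp [beliefMaxReachN, ht]]
        calc ∑' s, b s * polReachN P T σ (n+1) (πf s)
            ≤ ∑' s, b s * 1 :=
              ENNReal.tsum_le_tsum fun s =>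
                mul_le_mul_right (pol_le_one P T hP σ (n+1) _) _
          _ = 1 := by simpa using hb
      · obtain ⟨s₀, hs₀⟩ : ∃ s, b s ≠ 0 := by
          by_contra hc
          push_neg at hc
          rw [ENNReal.tsum_eq_zero.mpr hc] at hb
          exact one_ne_zero hb.symm
        set a := σ (πf s₀) with ha
        set πf' := fun s' => (πf s₀).extend a s' with hπf'
        set G := fun s' => polReachN P T σ n (πf' s') with hG
        have hpt : ∀ s, b s ≠ 0 →
            polReachN P T σ (n+1) (πf s) = ∑' s', P s a s' * G s' := by
          intro s hs
          have hσs : σ (πf s) = a := hσ _ _ (htr s s₀ hs hs₀)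
          rw [pol_succ P T habs, hlast, hσs]
          refine tsum_congr fun s' => ?_
          congr 1
          refine pol_congr P T σ (fun π π' => obsTrace O π = obsTrace O π')
            (fun π π' h => hσ _ _ h)
            (fun π π' a' s'' h => by
              show obsTrace O (π.extend a' s'') = obsTrace O (π'.extend a' s'')
              rw [obsTrace_extend, obsTrace_extend]
              rw [show obsTrace O π = obsTrace O π' from h])
            n _ _ ?_ ((extend_last _ _ _).trans (extend_last _ _ _).symm)
          show obsTrace O ((πf s).extend a s') = obsTrace O ((πf s₀).extend a s')
          rw [obsTrace_extend, obsTrace_extend, htr s s₀ hs hs₀]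
        have hstep : ∑' s, b s * polReachN P T σ (n+1) (πf s)
            = ∑' s, b s * ∑' s', P s a s' * G s' := by
          refine tsum_congr fun s => ?_
          by_cases hs : b s = 0
          · simp [hs]
          · rw [hpt s hs]
        rw [hstep,
          exchange P O hP b hb a (fun s' _ => G s')]
        have hle : ∑ z' : Z, obsProb P O b a z'
              * ∑' s', beliefUpdate P O b a z' s' * G s'
            ≤ ∑ z' : Z, obsProb P O b a z'
              * beliefMaxReachN P O zT (n + 1) (beliefUpdate P O b a z') := by
          refine Finset.sum_le_sum fun z' _ => ?_
          by_cases hc : obsProb P O b a z' = 0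
          · simp [hc]
          · refine mul_le_mul_right ?_ _
            exact ih (beliefUpdate P O b a z') πf'
              (sum_beliefUpdate P O hP b hb a z' hc)
              (fun s' => extend_last _ _ _)
              (fun s t hs htn => by
                rw [obsTrace_extend, obsTrace_extend,
                  beliefUpdate_supp P O b a z' s hs,
                  beliefUpdate_supp P O b a z' t htn])
        refine hle.trans ?_
        rw [show beliefMaxReachN P O zT (n + 2) b
            = ⨆ a', ∑ z' : Z, obsProb P O b a' z'
                * beliefMaxReachN P O zT (n + 1) (beliefUpdate P O b a' z') by
          simp [beliefMaxReachN, ht]]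
        exact le_iSup (f := fun a' => ∑ z' : Z, obsProb P O b a' z'
          * beliefMaxReachN P O zT (n + 1) (beliefUpdate P O b a' z')) a

/-- The observation list of a path. -/
def obsList (π : FPath S A) : List Z := π.steps.map fun p => O p.2

/-- The node (belief) of the FSC after an observation list. -/
noncomputable def fscNode (σB : (S → ℝ≥0∞) → A) (b0 : S → ℝ≥0∞) (l : List Z) :
    S → ℝ≥0∞ :=
  l.foldl (fun c z => beliefUpdate P O c (σB c) z) b0

/-- The observation-based policy induced by the FSC `F_B`. -/
noncomputable def fscPol (σB : (S → ℝ≥0∞) → A) (b0 : S → ℝ≥0∞) (π : FPath S A) : A :=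
  σB (fscNode P O σB b0 (obsList O π))

lemma obsList_extend (π : FPath S A) (a : A) (s : S) :
    obsList O (π.extend a s) = obsList O π ++ [O s] := by
  simp [obsList, FPath.extend]

lemma fscNode_append (σB : (S → ℝ≥0∞) → A) (b0 : S → ℝ≥0∞) (l : List Z) (z : Z) :
    fscNode P O σB b0 (l ++ [z])
      = beliefUpdate P O (fscNode P O σB b0 l) (σB (fscNode P O σB b0 l)) z := by
  simp [fscNode, List.foldl_append]

lemma obsList_of_trace (π π' : FPath S A) (h : obsTrace O π = obsTrace O π') :
    obsList O π = obsList O π' := by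
  have h2 : π.steps.map (fun p => (p.1, O p.2)) = π'.steps.map (fun p => (p.1, O p.2)) :=
    congrArg Prod.snd h
  have h3 := congrArg (List.map Prod.snd) h2
  simpa [obsList, List.map_map, Function.comp_def] using h3

lemma fscPol_obsBased (σB : (S → ℝ≥0∞) → A) (b0 : S → ℝ≥0∞) :
    ObsBased O (fscPol P O σB b0) := by
  intro π π' h
  unfold fscPol
  rw [obsList_of_trace O π π' h]

lemma lemB2 (hP : ∀ s a, ∑' s', P s a s' = 1)
    (hT : ∀ s, s ∈ T ↔ O s = zT)
    (habs : ∀ s ∈ T, ∀ a s', P s a s' = if s' = s then 1 else 0)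
    (σB : (S → ℝ≥0∞) → A) (b0 : S → ℝ≥0∞) :
    ∀ (n : ℕ) (b : S → ℝ≥0∞) (πf : S → FPath S A), (∑' s, b s = 1) →
      (∀ s, (πf s).last = s) →
      (∀ s t, b s ≠ 0 → b t ≠ 0 → obsList O (πf s) = obsList O (πf t)) →
      (∀ s, b s ≠ 0 → fscNode P O σB b0 (obsList O (πf s)) = b) →
      beliefPolReachN P O zT σB n b
        ≤ ∑' s, b s * polReachN P T (fscPol P O σB b0) n (πf s) := by
  intro n
  induction n with
  | zero =>
      intro b πf hb hlast htr hnode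
      by_cases ht : targetBelief O zT b
      · have : ∑' s, b s * polReachN P T (fscPol P O σB b0) 0 (πf s) = ∑' s, b s := by
          refine tsum_congr fun s => ?_
          by_cases hs : b s = 0
          · simp [hs]
          · rw [pol_target P T _ 0 _ (by rw [hlast]; exact (hT s).mpr (ht s hs)), mul_one]
        rw [this, hb]
        simp [beliefPolReachN, ht]
      · simp [beliefPolReachN, ht]
  | succ n ih =>
      intro b πf hb hlast htr hnode
      by_cases ht : targetBelief O zT b
      · have : ∑' s, b s * polReachN P T (fscPol P O σB b0) (n+1) (πf s) = ∑' s, b s := by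
          refine tsum_congr fun s => ?_
          by_cases hs : b s = 0
          · simp [hs]
          · rw [pol_target P T _ (n+1) _ (by rw [hlast]; exact (hT s).mpr (ht s hs)),
              mul_one]
        rw [this, hb]
        simp [beliefPolReachN, ht]
      · obtain ⟨s₀, hs₀⟩ : ∃ s, b s ≠ 0 := by
          by_contra hc
          push_neg at hc
          rw [ENNReal.tsum_eq_zero.mpr hc] at hb
          exact one_ne_zero hb.symm
        set σ := fscPol P O σB b0 with hσdef
        have hσL : ∀ π π', obsList O π = obsList O π' → σ π = σ π' := by
          intro π π' h
          show fscPol P O σB b0 π = fscPol P O σB b0 π'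
          unfold fscPol
          rw [h]
        set a := σB b with ha
        set πf' := fun s' => (πf s₀).extend a s' with hπf'
        set G := fun s' => polReachN P T σ n (πf' s') with hG
        have hpt : ∀ s, b s ≠ 0 →
            polReachN P T σ (n+1) (πf s) = ∑' s', P s a s' * G s' := by
          intro s hs
          have hσs : σ (πf s) = a := by
            show fscPol P O σB b0 (πf s) = σB b
            unfold fscPol
            rw [hnode s hs]
          rw [pol_succ P T habs, hlast, hσs]
          refine tsum_congr fun s' => ?_
          congr 1
          refine pol_congr P T σ (fun π π' => obsList O π = obsList O π')
            hσL
            (fun π π' a' s'' h => by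
              show obsList O (π.extend a' s'') = obsList O (π'.extend a' s'')
              rw [obsList_extend, obsList_extend]
              rw [show obsList O π = obsList O π' from h])
            n _ _ ?_ ((extend_last _ _ _).trans (extend_last _ _ _).symm)
          show obsList O ((πf s).extend a s') = obsList O ((πf s₀).extend a s')
          rw [obsList_extend, obsList_extend, htr s s₀ hs hs₀]
        have hstep : ∑' s, b s * polReachN P T σ (n+1) (πf s)
            = ∑' s, b s * ∑' s', P s a s' * G s' := by
          refine tsum_congr fun s => ?_
          by_cases hs : b s = 0
          · simp [hs]
          · rw [hpt s hs]
        rw [hstep, exchange P O hP b hb a (fun s' _ => G s')]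
        have hlhs : beliefPolReachN P O zT σB (n + 1) b
            = ∑ z' : Z, obsProb P O b a z'
                * beliefPolReachN P O zT σB n (beliefUpdate P O b a z') := by
          simp [beliefPolReachN, ht, ha]
        rw [hlhs]
        refine Finset.sum_le_sum fun z' _ => ?_
        by_cases hc : obsProb P O b a z' = 0
        · simp [hc]
        · refine mul_le_mul_right ?_ _
          exact ih (beliefUpdate P O b a z') πf'
            (sum_beliefUpdate P O hP b hb a z' hc)
            (fun s' => extend_last _ _ _)
            (fun s t hs htn => by
              rw [obsList_extend, obsList_extend,
                beliefUpdate_supp P O b a z' s hs,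
                beliefUpdate_supp P O b a z' t htn])
            (fun s' hs' => by
              rw [obsList_extend, beliefUpdate_supp P O b a z' s' hs',
                fscNode_append, hnode s₀ hs₀])

end AuxMain

/-- if the belief MDP has finitely many reachable beliefs, the FSC `F_B`
obtained from an optimal memoryless belief policy `σB` (nodes: beliefs; action function
`γ(b,z) = σB(b)`; update `δ(b,z,z') = ⟦b, σB(b), z'⟧`) induces on the POMDP the same
reachability probability of `T` as `σB` achieves in the belief MDP, namely the optimal
value, i.e. the supremum over all observation-based policies. -/
theorem belief_fsc_attains_optimum
    {S A Z : Type*} [Fintype Z]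
    (P : S → A → S → ℝ≥0∞) (hP : ∀ s a, ∑' s', P s a s' = 1)
    (O : S → Z) (s0 : S) (T : Set S) (zT : Z)
    (hT : ∀ s, s ∈ T ↔ O s = zT)
    (habs : ∀ s ∈ T, ∀ a s', P s a s' = if s' = s then 1 else 0)
    (σB : (S → ℝ≥0∞) → A)
    (hfin : {b | ReachableBelief P O (fun s => if s = s0 then 1 else 0) b}.Finite)
    (hopt : beliefPolReach P O zT σB (fun s => if s = s0 then 1 else 0)
          = beliefMaxReach (A := A) P O zT (fun s => if s = s0 then 1 else 0)) :
    mcReach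
        (inducedQ P O (fun (b : S → ℝ≥0∞) (_ : Z) => σB b)
          (fun (b : S → ℝ≥0∞) (_ : Z) (z' : Z) => beliefUpdate P O b (σB b) z'))
        {p : S × (S → ℝ≥0∞) | p.1 ∈ T}
        (s0, fun s => if s = s0 then 1 else 0)
      = beliefPolReach P O zT σB (fun s => if s = s0 then 1 else 0) ∧
    beliefPolReach P O zT σB (fun s => if s = s0 then 1 else 0)
      = ⨆ (σ : FPath S A → A) (_ : ObsBased O σ), polReach P T σ s0 := by
  set b0 : S → ℝ≥0∞ := fun s => if s = s0 then 1 else 0 with hb0def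
  have hb0 : ∑' s, b0 s = 1 := tsum_ite_eq s0 1
  have hdirac : ∀ f : S → ℝ≥0∞, ∑' s, b0 s * f s = f s0 := by
    intro f
    rw [tsum_eq_single s0 (fun s hs => by simp [hb0def, hs])]
    simp [hb0def]
  have hsupp : ∀ s, b0 s ≠ 0 → s = s0 := by
    intro s hs
    by_contra h
    exact hs (if_neg h)
  constructor
  · rw [show inducedQ P O (fun (b : S → ℝ≥0∞) (_ : Z) => σB b)
        (fun (b : S → ℝ≥0∞) (_ : Z) (z' : Z) => beliefUpdate P O b (σB b) z')
      = QF P O σB from rfl]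
    unfold mcReach beliefPolReach
    apply le_antisymm
    · refine iSup_le fun n => ?_
      calc mcReachN (QF P O σB) {p : S × (S → ℝ≥0∞) | p.1 ∈ T} n (s0, b0)
          = ∑' s, b0 s * mcReachN (QF P O σB) {p : S × (S → ℝ≥0∞) | p.1 ∈ T} n (s, b0) :=
            (hdirac (fun s => mcReachN (QF P O σB) {p : S × (S → ℝ≥0∞) | p.1 ∈ T} n (s, b0))).symm
        _ ≤ beliefPolReachN P O zT σB (n + 1) b0 := lemB P O σB T zT hP hT habs n b0 hb0
        _ ≤ ⨆ n, beliefPolReachN P O zT σB n b0 := le_iSup (fun n => beliefPolReachN P O zT σB n b0) (n + 1)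
    · refine iSup_le fun n => ?_
      calc beliefPolReachN P O zT σB n b0
          ≤ ∑' s, b0 s * mcReachN (QF P O σB) {p : S × (S → ℝ≥0∞) | p.1 ∈ T} n (s, b0) :=
            lemA P O σB T zT hP hT habs n b0 hb0
        _ = mcReachN (QF P O σB) {p : S × (S → ℝ≥0∞) | p.1 ∈ T} n (s0, b0) := hdirac _
        _ ≤ ⨆ n, mcReachN (QF P O σB) {p : S × (S → ℝ≥0∞) | p.1 ∈ T} n (s0, b0) :=
            le_iSup (fun n => mcReachN (QF P O σB) {p : S × (S → ℝ≥0∞) | p.1 ∈ T} n (s0, b0)) n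
  · apply le_antisymm
    · refine le_trans ?_ (le_iSup₂ (f := fun (σ : FPath S A → A) (_ : ObsBased O σ) =>
        polReach P T σ s0) (fscPol P O σB b0) (fscPol_obsBased P O σB b0))
      unfold beliefPolReach polReach
      refine iSup_le fun n => ?_
      calc beliefPolReachN P O zT σB n b0
          ≤ ∑' s, b0 s * polReachN P T (fscPol P O σB b0) n ⟨s, []⟩ :=
            lemB2 P O T zT hP hT habs σB b0 n b0 (fun s => ⟨s, []⟩) hb0
              (fun s => rfl)
              (fun s t hs ht => by rw [hsupp s hs, hsupp t ht])
              (fun s hs => rfl)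
        _ = polReachN P T (fscPol P O σB b0) n ⟨s0, []⟩ := hdirac _
        _ ≤ ⨆ n, polReachN P T (fscPol P O σB b0) n ⟨s0, []⟩ := le_iSup (fun n => polReachN P T (fscPol P O σB b0) n ⟨s0, []⟩) n
    · rw [hopt]
      refine iSup_le fun σ => iSup_le fun hσ => ?_
      unfold polReach beliefMaxReach
      refine iSup_le fun n => ?_
      calc polReachN P T σ n ⟨s0, []⟩
          = ∑' s, b0 s * polReachN P T σ n ⟨s, []⟩ :=
            (hdirac (fun s => polReachN P T σ n ⟨s, []⟩)).symm
        _ ≤ beliefMaxReachN P O zT (n + 1) b0 :=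
            lemA2 P O T zT hP hT habs ⟨σB b0⟩ σ hσ n b0 (fun s => ⟨s, []⟩) hb0
              (fun s => rfl)
              (fun s t hs ht => by rw [hsupp s hs, hsupp t ht])
        _ ≤ ⨆ n, beliefMaxReachN P O zT n b0 := le_iSup (fun n => beliefMaxReachN P O zT n b0) (n + 1)
end

section
/- Belief MDP value dominance: for a POMDP M with target states T carrying unique observation z^T, and for any FSC F for M, the value P^{M^F}(◇(T×N)) of F on M is at most the maximal reachability probability P_max^{M^B}(◇T^B) of target beliefs in the belief MDP from the initial belief {s0 ↦ 1}. -/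
open scoped ENNReal Classical

private lemma tsum_partition_obs {S Z : Type*} [Fintype Z] (O : S → Z) (g : S → ℝ≥0∞) :
    ∑' s, g s = ∑ z : Z, ∑' s, if O s = z then g s else 0 := by
  rw [← Summable.tsum_finsetSum (fun i _ => ENNReal.summable)]
  refine tsum_congr fun s => ?_
  simp [Finset.sum_ite_eq]

private lemma mcReachN_le_one {St : Type*} (Q : St → St → ℝ≥0∞)
    (hQ : ∀ s, ∑' s', Q s s' ≤ 1) (T : Set St) :
    ∀ (k : ℕ) (s : St), mcReachN Q T k s ≤ 1 := by
  intro k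
  induction k with
  | zero => intro s; simp only [mcReachN]; split <;> simp
  | succ k ih =>
    intro s
    simp only [mcReachN]
    split
    · exact le_refl _
    · calc ∑' s', Q s s' * mcReachN Q T k s'
          ≤ ∑' s', Q s s' * 1 :=
            Summable.tsum_le_tsum (fun s' => mul_le_mul_right (ih s') _)
              ENNReal.summable ENNReal.summable
        _ ≤ 1 := by simpa using hQ s

private lemma inducedQ_row {S A Z N : Type*} (P : S → A → S → ℝ≥0∞)
    (hP : ∀ s a, ∑' s', P s a s' = 1) (O : S → Z)
    (γ : N → Z → A) (δ : N → Z → Z → N) (p : S × N) :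
    ∑' q, inducedQ P O γ δ p q = 1 := by
  have hprod : (∑' q : S × N, inducedQ P O γ δ p q)
      = ∑' s', ∑' n', inducedQ P O γ δ p (s', n') :=
    ENNReal.tsum_prod (f := fun s' n' => inducedQ P O γ δ p (s', n'))
  rw [hprod]
  have h1 : ∀ s' : S, ∑' n' : N, inducedQ P O γ δ p (s', n') = P p.1 (γ p.2 (O p.1)) s' := by
    intro s'
    rw [tsum_eq_single (δ p.2 (O p.1) (O s'))]
    · simp [inducedQ]
    · intro n' hn'; simp [inducedQ, hn']
  rw [tsum_congr h1, hP]

private lemma key_lemma {S A Z N : Type*} [Fintype Z]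
    (P : S → A → S → ℝ≥0∞) (hP : ∀ s a, ∑' s', P s a s' = 1)
    (O : S → Z) (T : Set S) (zT : Z) (hT : ∀ s, s ∈ T ↔ O s = zT)
    (γ : N → Z → A) (δ : N → Z → Z → N) :
    ∀ (k : ℕ) (b : S → ℝ≥0∞) (n : N), (∑' s, b s) ≤ 1 →
      (∀ s s', b s ≠ 0 → b s' ≠ 0 → O s = O s') →
      ∑' s, b s * mcReachN (inducedQ P O γ δ) {p : S × N | p.1 ∈ T} k (s, n)
        ≤ beliefMaxReachN P O zT k b := by
  intro k
  have hrow : ∀ p, ∑' q, inducedQ P O γ δ p q ≤ 1 :=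
    fun p => le_of_eq (inducedQ_row P hP O γ δ p)
  induction k with
  | zero =>
    intro b n hmass hcst
    by_cases htb : targetBelief O zT b
    · simp only [beliefMaxReachN, if_pos htb]
      calc ∑' s, b s * mcReachN (inducedQ P O γ δ) {p : S × N | p.1 ∈ T} 0 (s, n)
          ≤ ∑' s, b s * 1 :=
            Summable.tsum_le_tsum (fun s => mul_le_mul_right
              (mcReachN_le_one _ hrow _ 0 _) _) ENNReal.summable ENNReal.summable
        _ ≤ 1 := by simpa using hmass
    · simp only [beliefMaxReachN, if_neg htb]
      refine le_of_eq (ENNReal.tsum_eq_zero.mpr fun s => ?_)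
      by_cases hs : b s = 0
      · simp [hs]
      · unfold targetBelief at htb
        push_neg at htb
        obtain ⟨t, ht0, htz⟩ := htb
        have : O s ≠ zT := by rw [hcst s t hs ht0]; exact htz
        have hsT : s ∉ T := fun h => this ((hT s).mp h)
        simp [mcReachN, hsT]
  | succ k ih =>
    intro b n hmass hcst
    by_cases htb : targetBelief O zT b
    · simp only [beliefMaxReachN, if_pos htb]
      calc ∑' s, b s * mcReachN (inducedQ P O γ δ) {p : S × N | p.1 ∈ T} (k+1) (s, n)
          ≤ ∑' s, b s * 1 :=
            Summable.tsum_le_tsum (fun s => mul_le_mul_right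
              (mcReachN_le_one _ hrow _ (k+1) _) _) ENNReal.summable ENNReal.summable
        _ ≤ 1 := by simpa using hmass
    · have htb' := htb
      unfold targetBelief at htb'
      push_neg at htb'
      obtain ⟨t, ht0, htz⟩ := htb'
      set z : Z := O t with hz
      set a : A := γ n z with ha
      have hobs : ∀ s, b s ≠ 0 → O s = z := fun s hs => hcst s t hs ht0
      have hnotT : ∀ s, b s ≠ 0 → s ∉ T := fun s hs h => htz (hobs s hs ▸ (hT s).mp h)
      set Qc := inducedQ P O γ δ with hQc
      set TS : Set (S × N) := {p : S × N | p.1 ∈ T} with hTS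
      set m : S → ℝ≥0∞ := fun s' => mcReachN Qc TS k (s', δ n z (O s')) with hm
      -- step 1: unfold one step of the Markov chain
      have step1 : ∑' s, b s * mcReachN Qc TS (k+1) (s, n)
          = ∑' s, ∑' s', b s * (P s a s' * m s') := by
        refine tsum_congr fun s => ?_
        by_cases hs : b s = 0
        · simp [hs]
        · have hsT : (s, n) ∉ TS := hnotT s hs
          have hmc : mcReachN Qc TS (k+1) (s, n) = ∑' s', P s a s' * m s' := by
            simp only [mcReachN, if_neg hsT]
            have hprod : (∑' q : S × N, Qc (s, n) q * mcReachN Qc TS k q)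
                = ∑' s', ∑' n', Qc (s, n) (s', n') * mcReachN Qc TS k (s', n') :=
              ENNReal.tsum_prod (f := fun s' n' => Qc (s, n) (s', n') * mcReachN Qc TS k (s', n'))
            rw [hprod]
            refine tsum_congr fun s' => ?_
            rw [tsum_eq_single (δ n z (O s'))]
            · simp [hQc, inducedQ, hobs s hs, ha, hm]
            · intro n' hn'; simp [hQc, inducedQ, hobs s hs, hn']
          rw [hmc, ENNReal.tsum_mul_left]
      -- step 2: swap sums
      set w : S → ℝ≥0∞ := fun s' => ∑' s, b s * P s a s' with hw
      have step2 : ∑' s, ∑' s', b s * (P s a s' * m s') = ∑' s', w s' * m s' := by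
        rw [ENNReal.tsum_comm]
        refine tsum_congr fun s' => ?_
        rw [← ENNReal.tsum_mul_right]
        exact tsum_congr fun s => by ring
      -- step 3: partition over observations
      have step3 : ∑' s', w s' * m s'
          = ∑ z' : Z, ∑' s', if O s' = z' then w s' * m s' else 0 :=
        tsum_partition_obs O _
      -- obsProb in terms of w
      have hobsProb : ∀ z' : Z, obsProb P O b a z' = ∑' s', if O s' = z' then w s' else 0 := by
        intro z'
        unfold obsProb
        rw [show ∀ (f : S → S → ℝ≥0∞), (∑' s, b s * ∑' s', f s s') = ∑' s, ∑' s', b s * f s s'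
          from fun f => tsum_congr fun s => (ENNReal.tsum_mul_left).symm]
        rw [ENNReal.tsum_comm]
        refine tsum_congr fun s' => ?_
        split
        · rfl
        · simp
      have hobsProbW : ∀ z' : Z, obsProb P O b a z' = ∑' s', if O s' = z' then w s' else 0 :=
        hobsProb
      -- per-observation bound
      have step4 : ∀ z' : Z, ∑' s', (if O s' = z' then w s' * m s' else 0)
          ≤ obsProb P O b a z' * beliefMaxReachN P O zT k (beliefUpdate P O b a z') := by
        intro z'
        by_cases hc : obsProb P O b a z' = 0
        · have hw0 : ∀ s', (if O s' = z' then w s' else 0) = 0 := by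
            intro s'
            exact ENNReal.tsum_eq_zero.mp ((hobsProbW z') ▸ hc) s'
          have : ∀ s', (if O s' = z' then w s' * m s' else 0) = 0 := by
            intro s'
            by_cases h : O s' = z'
            · have := hw0 s'; rw [if_pos h] at this ⊢; rw [this, zero_mul]
            · rw [if_neg h]
          simp [ENNReal.tsum_eq_zero.mpr this]
        · have hcfin : obsProb P O b a z' ≠ ⊤ := by
            have : obsProb P O b a z' ≤ 1 := by
              rw [hobsProbW z']
              calc ∑' s', (if O s' = z' then w s' else 0) ≤ ∑' s', w s' :=
                    Summable.tsum_le_tsum (fun s' => by split <;> simp)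
                      ENNReal.summable ENNReal.summable
                _ = ∑' s, b s * ∑' s', P s a s' := by
                    rw [ENNReal.tsum_comm]
                    exact tsum_congr fun s => ENNReal.tsum_mul_left
                _ ≤ 1 := by
                    simp only [hP]
                    simpa using hmass
            exact ne_top_of_le_ne_top ENNReal.one_ne_top this
          set b' : S → ℝ≥0∞ := beliefUpdate P O b a z' with hb'
          have hb'def : ∀ s', b' s' = if O s' = z' then w s' / obsProb P O b a z' else 0 := by
            intro s'; rfl
          have hterm : ∀ s', (if O s' = z' then w s' * m s' else 0)
              = obsProb P O b a z' * (b' s' * mcReachN Qc TS k (s', δ n z z')) := by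
            intro s'
            by_cases h : O s' = z'
            · rw [if_pos h, hb'def s', if_pos h]
              have : m s' = mcReachN Qc TS k (s', δ n z z') := by rw [hm]; simp [h]
              rw [this, ← mul_assoc, ENNReal.mul_div_cancel hc hcfin]
            · rw [if_neg h, hb'def s', if_neg h, zero_mul, mul_zero]
          rw [tsum_congr hterm, ENNReal.tsum_mul_left]
          refine mul_le_mul_right ?_ _
          -- apply IH to b'
          have hmass' : ∑' s', b' s' ≤ 1 := by
            have : ∑' s', b' s' = (∑' s', if O s' = z' then w s' else 0) / obsProb P O b a z' := by
              rw [div_eq_mul_inv, ← ENNReal.tsum_mul_right]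
              refine tsum_congr fun s' => ?_
              rw [hb'def]
              split <;> simp [div_eq_mul_inv]
            rw [this, ← hobsProbW z']
            exact ENNReal.div_self_le_one
          have hcst' : ∀ s s', b' s ≠ 0 → b' s' ≠ 0 → O s = O s' := by
            intro s s' hs hs'
            have h1 : O s = z' := by
              by_contra h; exact hs (by rw [hb'def s, if_neg h])
            have h2 : O s' = z' := by
              by_contra h; exact hs' (by rw [hb'def s', if_neg h])
            rw [h1, h2]
          exact ih b' (δ n z z') hmass' hcst'
      calc ∑' s, b s * mcReachN Qc TS (k+1) (s, n)
          = ∑ z' : Z, ∑' s', if O s' = z' then w s' * m s' else 0 := by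
            rw [step1, step2, step3]
        _ ≤ ∑ z' : Z, obsProb P O b a z'
              * beliefMaxReachN P O zT k (beliefUpdate P O b a z') :=
            Finset.sum_le_sum fun z' _ => step4 z'
        _ ≤ beliefMaxReachN P O zT (k+1) b := by
            simp only [beliefMaxReachN, if_neg htb]
            exact le_iSup (fun a => ∑ z' : Z, obsProb P O b a z'
              * beliefMaxReachN P O zT k (beliefUpdate P O b a z')) a

/-- belief MDP value dominance.  For any FSC `F = (N, n0, γ, δ)` for a
POMDP with absorbing targets `T` carrying the unique observation `zT`, the value
`P^{M^F}(◇(T×N))` from `(s0, n0)` is at most the maximal reachability probability of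
target beliefs in the belief MDP from the initial belief `{s0 ↦ 1}`. -/
theorem fsc_value_le_belief_optimum
    {S A Z N : Type*} [Fintype Z]
    (P : S → A → S → ℝ≥0∞) (hP : ∀ s a, ∑' s', P s a s' = 1)
    (O : S → Z) (s0 : S) (T : Set S) (zT : Z)
    (hT : ∀ s, s ∈ T ↔ O s = zT)
    (habs : ∀ s ∈ T, ∀ a s', P s a s' = if s' = s then 1 else 0)
    (γ : N → Z → A) (δ : N → Z → Z → N) (n0 : N) :
    mcReach (inducedQ P O γ δ) {p : S × N | p.1 ∈ T} (s0, n0)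
      ≤ beliefMaxReach (A := A) P O zT (fun s => if s = s0 then 1 else 0) := by
  refine iSup_le fun k => ?_
  refine le_trans ?_ (le_iSup _ k)
  have hb0 : (∑' s, (fun s => if s = s0 then (1:ℝ≥0∞) else 0) s) ≤ 1 := by
    rw [tsum_eq_single s0 (fun s hs => if_neg hs)]; simp
  have hc0 : ∀ s s', (if s = s0 then (1:ℝ≥0∞) else 0) ≠ 0 →
      (if s' = s0 then (1:ℝ≥0∞) else 0) ≠ 0 → O s = O s' := by
    intro s s' hs hs'
    have h1 : s = s0 := by by_contra h; exact hs (if_neg h)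
    have h2 : s' = s0 := by by_contra h; exact hs' (if_neg h)
    rw [h1, h2]
  have hkey := key_lemma P hP O T zT hT γ δ k
    (fun s => if s = s0 then 1 else 0) n0 hb0 hc0
  refine le_trans (le_of_eq ?_) hkey
  rw [tsum_eq_single s0 (fun s hs => by simp [hs])]
  simp
end
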